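/- Let d ≥ 2 be an integer and define N₂(t) = ∫₀^{2/t} [r^d / (1 + r²)^{(d+1)/2}] (1 − t²r²/4)^{(d−1)/2} dr for t > 0. Then liminf_{t → 0⁺} N₂(t) / ln(1/t) ≥ 1. -/

import Mathlib

open MeasureTheory Filter

/-- Bernoulli's inequality in the form `1 - p*x ≤ (1-x)^p` for `1 ≤ p`, `x ≤ 1`. -/
lemma N2aux_bern {p x : ℝ} (hp : 1 ≤ p) (hx : x ≤ 1) : 1 - p * x ≤ (1 - x) ^ p := by
  have h := one_add_mul_self_le_rpow_one_add (s := -x) (by linarith) hp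
  rw [mul_neg, ← sub_eq_add_neg, ← sub_eq_add_neg] at h
  exact h

set_option maxHeartbeats 2000000 in
theorem N2_liminf_ge_one (d : ℕ) (hd : 2 ≤ d) (N₂ : ℝ → ℝ)
    (hN₂ : ∀ t > 0, N₂ t =
      ∫ r in (0 : ℝ)..(2 / t),
        r ^ (d : ℕ) / (1 + r ^ 2) ^ (((d : ℝ) + 1) / 2) *
          (1 - t ^ 2 * r ^ 2 / 4) ^ (((d : ℝ) - 1) / 2)) :
    1 ≤ liminf (fun t => N₂ t / Real.log (1 / t)) (nhdsWithin 0 (Set.Ioi 0)) := by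
  have hd2 : (2 : ℝ) ≤ (d : ℝ) := by exact_mod_cast hd
  set p : ℝ := ((d : ℝ) + 1) / 2 with hp_def
  set q : ℝ := ((d : ℝ) - 1) / 2 with hq_def
  have hp1 : 1 ≤ p := by rw [hp_def]; linarith
  have hq0 : 0 < q := by rw [hq_def]; linarith
  set F : ℝ → ℝ → ℝ := fun t r =>
      r ^ (d : ℕ) / (1 + r ^ 2) ^ p * (1 - t ^ 2 * r ^ 2 / 4) ^ q with hF_def
  -- continuity
  have hcont : ∀ t : ℝ, Continuous (F t) := by
    intro t
    have h1 : Continuous fun r : ℝ => ((1 : ℝ) + r ^ 2) ^ p :=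
      (continuous_const.add (continuous_pow 2)).rpow_const fun x => Or.inr (by linarith)
    have h2 : Continuous fun r : ℝ => ((1 : ℝ) - t ^ 2 * r ^ 2 / 4) ^ q := by
      refine Continuous.rpow_const ?_ fun x => Or.inr hq0.le
      continuity
    exact ((continuous_pow d).div h1
      (fun x => (Real.rpow_pos_of_pos (by positivity) p).ne')).mul h2
  have hFint : ∀ t a b : ℝ, IntervalIntegrable (F t) volume a b := fun t a b =>
    (hcont t).intervalIntegrable a b
  -- lower bound on the second factor
  have hB : ∀ x : ℝ, 0 ≤ x → x ≤ 1 → 1 - (d : ℝ) * x ≤ (1 - x) ^ q := by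
    intro x hx0 hx1
    rcases lt_or_ge q 1 with h | h
    · rcases eq_or_lt_of_le hx1 with rfl | hx1'
      · rw [sub_self, Real.zero_rpow hq0.ne']
        nlinarith
      · have hb0 : (0 : ℝ) < 1 - x := by linarith
        have h1 : (1 - x) ^ (1 : ℝ) ≤ (1 - x) ^ q :=
          Real.rpow_le_rpow_of_exponent_ge hb0 (by linarith) h.le
        rw [Real.rpow_one] at h1
        nlinarith
    · have h2 := N2aux_bern h hx1
      have hqd : q ≤ (d : ℝ) := by rw [hq_def]; linarith
      nlinarith
  -- upper bound on the first factor, r ≥ 0 (A ≤ 1 for r ≤ 1 handled separately)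
  have hA_pow : ∀ r : ℝ, 0 < r → (r ^ 2 : ℝ) ^ p = r ^ (d + 1 : ℕ) := by
    intro r hr
    rw [← Real.rpow_natCast r 2, ← Real.rpow_mul hr.le, ← Real.rpow_natCast r (d + 1)]
    norm_num [hp_def]
    ring_nf
  have hAub : ∀ r : ℝ, 1 ≤ r → r ^ (d : ℕ) / (1 + r ^ 2) ^ p ≤ 1 / r := by
    intro r hr1
    have hr0 : (0 : ℝ) < r := lt_of_lt_of_le one_pos hr1
    have hpos : (0 : ℝ) < (1 + r ^ 2) ^ p := Real.rpow_pos_of_pos (by positivity) p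
    rw [div_le_div_iff₀ hpos hr0]
    have h1 : (r ^ 2 : ℝ) ^ p ≤ (1 + r ^ 2) ^ p :=
      Real.rpow_le_rpow (by positivity) (by linarith) (by linarith)
    rw [hA_pow r hr0] at h1
    calc r ^ (d : ℕ) * r = r ^ (d + 1 : ℕ) := (pow_succ r d).symm
      _ ≤ (1 + r ^ 2) ^ p := h1
      _ = 1 * (1 + r ^ 2) ^ p := (one_mul _).symm
  have hAlb : ∀ r : ℝ, 1 ≤ r → 1 / r - p / r ^ 3 ≤ r ^ (d : ℕ) / (1 + r ^ 2) ^ p := by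
    intro r hr1
    have hr0 : (0 : ℝ) < r := lt_of_lt_of_le one_pos hr1
    have hden : (0 : ℝ) < 1 + r ^ 2 := by positivity
    have key : 1 - p / (1 + r ^ 2) ≤ (r ^ 2 / (1 + r ^ 2)) ^ p := by
      have h := N2aux_bern (x := 1 / (1 + r ^ 2)) hp1 (by
        rw [div_le_one hden]; nlinarith)
      rw [mul_one_div] at h
      have e : (1 : ℝ) - 1 / (1 + r ^ 2) = r ^ 2 / (1 + r ^ 2) := by
        field_simp
        ring
      rwa [e] at h
    have e2 : (r ^ 2 / (1 + r ^ 2)) ^ p = r ^ (d + 1 : ℕ) / (1 + r ^ 2) ^ p := by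
      rw [Real.div_rpow (by positivity) hden.le, hA_pow r hr0]
    rw [e2] at key
    -- key : 1 - p/(1+r²) ≤ r^{d+1}/(1+r²)^p
    have h3 : 1 - p / r ^ 2 ≤ r ^ (d + 1 : ℕ) / (1 + r ^ 2) ^ p := by
      refine le_trans ?_ key
      have : p / (1 + r ^ 2) ≤ p / r ^ 2 := by
        apply div_le_div_of_nonneg_left (by linarith) (by positivity) (by linarith)
      linarith
    calc 1 / r - p / r ^ 3 = (1 - p / r ^ 2) / r := by field_simp
      _ ≤ (r ^ (d + 1 : ℕ) / (1 + r ^ 2) ^ p) / r := by gcongr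
      _ = r ^ (d : ℕ) / (1 + r ^ 2) ^ p := by
          rw [div_div, pow_succ]
          rw [mul_comm ((1 + r ^ 2) ^ p) r, ← div_div, mul_div_assoc, div_self hr0.ne', mul_one]
  have hppos : (0:ℝ) < p := lt_of_lt_of_le one_pos hp1
  have hN₂' : ∀ t > 0, N₂ t = ∫ r in (0:ℝ)..(2/t), F t r := fun t ht => hN₂ t ht
  -- pointwise comparison on [1, 1/t]
  have hpt : ∀ t ∈ Set.Ioo (0:ℝ) 1, ∀ r ∈ Set.Icc (1:ℝ) (1/t),
      1 / r - p / r ^ 3 - ((d:ℝ) * t ^ 2 / 4) * r ≤ F t r := by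
    rintro t ⟨ht0, ht1⟩ r ⟨hr1, hrt⟩
    have hr0 : (0:ℝ) < r := lt_of_lt_of_le one_pos hr1
    have htr : r * t ≤ 1 := (le_div_iff₀ ht0).mp hrt
    have hx1 : t ^ 2 * r ^ 2 / 4 ≤ 1 := by
      nlinarith [mul_nonneg (sub_nonneg.2 htr) (mul_nonneg hr0.le ht0.le)]
    have hx0 : 0 ≤ t ^ 2 * r ^ 2 / 4 := by positivity
    have hB' := hB _ hx0 hx1
    have hA1 := hAub r hr1
    have hA2 := hAlb r hr1
    have hA0 : (0:ℝ) ≤ r ^ (d:ℕ) / (1 + r ^ 2) ^ p := by positivity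
    have hB0 : (0:ℝ) ≤ (1 - t ^ 2 * r ^ 2 / 4) ^ q := Real.rpow_nonneg (by linarith) q
    have hpr3 : (0:ℝ) ≤ p / r ^ 3 := div_nonneg hppos.le (by positivity)
    rcases le_or_gt (1 - (d:ℝ) * (t ^ 2 * r ^ 2 / 4)) 0 with h | h
    · have h1 : 1 / r ≤ ((d:ℝ) * t ^ 2 / 4) * r := by
        rw [div_le_iff₀ hr0]
        nlinarith
      have : 1 / r - p / r ^ 3 - ((d:ℝ) * t ^ 2 / 4) * r ≤ 0 := by linarith
      exact this.trans (mul_nonneg hA0 hB0)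
    · have e1 : (1 / r - p / r ^ 3) * (1 - (d:ℝ) * (t ^ 2 * r ^ 2 / 4))
          - (1 / r - p / r ^ 3 - ((d:ℝ) * t ^ 2 / 4) * r)
          = (p / r ^ 3) * ((d:ℝ) * (t ^ 2 * r ^ 2 / 4)) := by
        field_simp
        ring
      have h2 : (1 / r - p / r ^ 3) * (1 - (d:ℝ) * (t ^ 2 * r ^ 2 / 4))
          ≤ (r ^ (d:ℕ) / (1 + r ^ 2) ^ p) * (1 - (d:ℝ) * (t ^ 2 * r ^ 2 / 4)) :=
        mul_le_mul_of_nonneg_right hA2 h.le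
      have h3 : (r ^ (d:ℕ) / (1 + r ^ 2) ^ p) * (1 - (d:ℝ) * (t ^ 2 * r ^ 2 / 4))
          ≤ (r ^ (d:ℕ) / (1 + r ^ 2) ^ p) * ((1 - t ^ 2 * r ^ 2 / 4) ^ q) :=
        mul_le_mul_of_nonneg_left hB' hA0
      have h4 : 0 ≤ (p / r ^ 3) * ((d:ℝ) * (t ^ 2 * r ^ 2 / 4)) :=
        mul_nonneg hpr3 (by positivity)
      show _ ≤ r ^ (d:ℕ) / (1 + r ^ 2) ^ p * (1 - t ^ 2 * r ^ 2 / 4) ^ q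
      linarith
  -- main lower bound
  have hmain : ∀ t ∈ Set.Ioo (0:ℝ) 1, Real.log (1/t) - (p / 2 + (d:ℝ) / 8) ≤ N₂ t := by
    rintro t ⟨ht0, ht1⟩
    have htinv : (1:ℝ) ≤ 1 / t := by rw [le_div_iff₀ ht0]; linarith
    have h2t : (1:ℝ)/t ≤ 2/t := by gcongr; norm_num
    have h12t : (1:ℝ) ≤ 2/t := le_trans htinv h2t
    have h0uIcc : (0:ℝ) ∉ Set.uIcc (1:ℝ) (1/t) := by
      rw [Set.uIcc_of_le htinv]
      rintro ⟨h, -⟩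
      linarith
    -- integrability of the comparison pieces
    have hi1 : IntervalIntegrable (fun r : ℝ => 1/r) volume 1 (1/t) := by
      apply intervalIntegral.intervalIntegrable_one_div (f := fun r : ℝ => r)
      · intro x hx
        rw [Set.uIcc_of_le htinv] at hx
        exact (lt_of_lt_of_le one_pos hx.1).ne'
      · exact continuousOn_id
    have hi2 : IntervalIntegrable (fun r : ℝ => p / r ^ 3) volume 1 (1/t) := by
      have : IntervalIntegrable (fun r : ℝ => 1 / r ^ 3) volume 1 (1/t) := by
        apply intervalIntegral.intervalIntegrable_one_div (f := fun r : ℝ => r ^ 3)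
        · intro x hx
          rw [Set.uIcc_of_le htinv] at hx
          exact pow_ne_zero 3 (lt_of_lt_of_le one_pos hx.1).ne'
        · exact (continuous_pow 3).continuousOn
      have e : (fun r : ℝ => p / r ^ 3) = fun r : ℝ => p * (1 / r ^ 3) := by
        funext r; rw [mul_one_div]
      rw [e]
      exact this.const_mul p
    have hi3 : IntervalIntegrable (fun r : ℝ => ((d:ℝ) * t ^ 2 / 4) * r) volume 1 (1/t) :=
      (continuous_const.mul continuous_id).intervalIntegrable 1 (1/t)
    -- compute the comparison integral
    have e2 : (∫ r in (1:ℝ)..(1/t), p / r ^ 3) = p * ((1 - t ^ 2) / 2) := by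
      have h' : ∀ r : ℝ, p / r ^ 3 = p * r ^ (-3 : ℤ) := by
        intro r
        rw [zpow_neg, div_eq_mul_inv]
        norm_cast
      simp only [h']
      rw [intervalIntegral.integral_const_mul, integral_zpow (Or.inr ⟨by norm_num, h0uIcc⟩)]
      have ht' : ((1:ℝ)/t) ^ (-3 + 1 : ℤ) = t ^ 2 := by
        have e : (-3 + 1 : ℤ) = -2 := by norm_num
        rw [e, zpow_neg, one_div, inv_zpow, inv_inv]
        norm_cast
      rw [ht']
      push_cast
      ring
    have e3 : (∫ r in (1:ℝ)..(1/t), ((d:ℝ) * t ^ 2 / 4) * r)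
        = ((d:ℝ) * t ^ 2 / 4) * (((1/t) ^ 2 - 1) / 2) := by
      rw [intervalIntegral.integral_const_mul, integral_id]
      norm_num
    have hIG : (∫ r in (1:ℝ)..(1/t), (1/r - p / r ^ 3 - ((d:ℝ) * t ^ 2 / 4) * r))
        = Real.log (1/t) - p * ((1 - t ^ 2) / 2) - ((d:ℝ) * t ^ 2 / 4) * (((1/t) ^ 2 - 1) / 2) := by
      rw [intervalIntegral.integral_sub (hi1.sub hi2) hi3, intervalIntegral.integral_sub hi1 hi2,
        integral_one_div h0uIcc, div_one, e2, e3]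
    have hmono : (∫ r in (1:ℝ)..(1/t), (1/r - p / r ^ 3 - ((d:ℝ) * t ^ 2 / 4) * r))
        ≤ ∫ r in (1:ℝ)..(1/t), F t r :=
      intervalIntegral.integral_mono_on htinv ((hi1.sub hi2).sub hi3) (hFint t 1 (1/t))
        (hpt t ⟨ht0, ht1⟩)
    -- nonnegativity of the other pieces
    have hFpos : ∀ s ∈ Set.Icc (0:ℝ) (2/t), 0 ≤ F t s := by
      rintro s ⟨hs0, hs2⟩
      have hst : s * t ≤ 2 := (le_div_iff₀ ht0).mp hs2
      have hbase : 0 ≤ 1 - t ^ 2 * s ^ 2 / 4 := by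
        nlinarith [mul_nonneg (sub_nonneg.2 hst) (mul_nonneg hs0 ht0.le)]
      have h1 : 0 ≤ s ^ (d:ℕ) / (1 + s ^ 2) ^ p := by positivity
      exact mul_nonneg h1 (Real.rpow_nonneg hbase q)
    have hnn1 : 0 ≤ ∫ r in (0:ℝ)..1, F t r := by
      apply intervalIntegral.integral_nonneg (by norm_num)
      intro u hu
      exact hFpos u ⟨hu.1, le_trans hu.2 h12t⟩
    have hnn3 : 0 ≤ ∫ r in (1/t)..(2/t), F t r := by
      apply intervalIntegral.integral_nonneg h2t
      intro u hu
      exact hFpos u ⟨le_trans (by positivity) hu.1, hu.2⟩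
    have hsplit : N₂ t = (∫ r in (0:ℝ)..1, F t r) + (∫ r in (1:ℝ)..(1/t), F t r)
        + (∫ r in (1/t)..(2/t), F t r) := by
      rw [hN₂' t ht0,
        intervalIntegral.integral_add_adjacent_intervals (hFint t 0 1) (hFint t 1 (1/t)),
        intervalIntegral.integral_add_adjacent_intervals (hFint t 0 (1/t)) (hFint t (1/t) (2/t))]
    have final : Real.log (1/t) - p * ((1 - t ^ 2) / 2)
        - ((d:ℝ) * t ^ 2 / 4) * (((1/t) ^ 2 - 1) / 2) ≤ N₂ t := by
      rw [hsplit, ← hIG]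
      linarith
    have hcc1 : p * ((1 - t ^ 2) / 2) ≤ p / 2 := by nlinarith [sq_nonneg t]
    have hcc2 : ((d:ℝ) * t ^ 2 / 4) * (((1/t) ^ 2 - 1) / 2) ≤ (d:ℝ) / 8 := by
      have ht2 : (1/t) ^ 2 * t ^ 2 = 1 := by field_simp
      nlinarith [sq_nonneg t]
    linarith
  -- upper bound (for coboundedness)
  have hub' : ∀ t ∈ Set.Ioo (0:ℝ) 1, N₂ t ≤ 1 + Real.log 2 + Real.log (1/t) := by
    rintro t ⟨ht0, ht1⟩
    have h12t : (1:ℝ) ≤ 2/t := by rw [le_div_iff₀ ht0]; linarith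
    have h0uIcc2 : (0:ℝ) ∉ Set.uIcc (1:ℝ) (2/t) := by
      rw [Set.uIcc_of_le h12t]
      rintro ⟨h, -⟩
      linarith
    have hsplit2 : N₂ t = (∫ r in (0:ℝ)..1, F t r) + (∫ r in (1:ℝ)..(2/t), F t r) := by
      rw [hN₂' t ht0,
        intervalIntegral.integral_add_adjacent_intervals (hFint t 0 1) (hFint t 1 (2/t))]
    have hb1 : (∫ r in (0:ℝ)..1, F t r) ≤ 1 := by
      have h1 : (∫ r in (0:ℝ)..1, F t r) ≤ ∫ _ in (0:ℝ)..1, (1:ℝ) := by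
        apply intervalIntegral.integral_mono_on (by norm_num) (hFint t 0 1)
          (intervalIntegrable_const)
        rintro s ⟨hs0, hs1⟩
        have hts2 : t ^ 2 * s ^ 2 ≤ 1 := by
          nlinarith [pow_le_one₀ ht0.le ht1.le (n := 2), pow_le_one₀ hs0 hs1 (n := 2),
            sq_nonneg t, sq_nonneg s]
        have hbase0 : 0 ≤ 1 - t ^ 2 * s ^ 2 / 4 := by nlinarith
        have hB1 : (1 - t ^ 2 * s ^ 2 / 4) ^ q ≤ 1 :=
          Real.rpow_le_one hbase0 (by nlinarith [sq_nonneg t, sq_nonneg s, mul_nonneg (sq_nonneg t) (sq_nonneg s)]) hq0.le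
        have hB0' : 0 ≤ (1 - t ^ 2 * s ^ 2 / 4) ^ q := Real.rpow_nonneg hbase0 q
        have hA1' : s ^ (d:ℕ) / (1 + s ^ 2) ^ p ≤ 1 := by
          rw [div_le_one (Real.rpow_pos_of_pos (by positivity) p)]
          calc s ^ (d:ℕ) ≤ 1 := pow_le_one₀ hs0 hs1
            _ = (1:ℝ) ^ p := (Real.one_rpow p).symm
            _ ≤ (1 + s ^ 2) ^ p := Real.rpow_le_rpow zero_le_one (by nlinarith) hppos.le
        have hA0' : 0 ≤ s ^ (d:ℕ) / (1 + s ^ 2) ^ p := by positivity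
        calc F t s ≤ 1 * 1 := mul_le_mul hA1' hB1 hB0' zero_le_one
          _ = 1 := one_mul 1
      simpa using h1
    have hb2 : (∫ r in (1:ℝ)..(2/t), F t r) ≤ Real.log (2/t) := by
      have hi1' : IntervalIntegrable (fun r : ℝ => 1/r) volume 1 (2/t) := by
        apply intervalIntegral.intervalIntegrable_one_div (f := fun r : ℝ => r)
        · intro x hx
          rw [Set.uIcc_of_le h12t] at hx
          exact (lt_of_lt_of_le one_pos hx.1).ne'
        · exact continuousOn_id
      have h1 : (∫ r in (1:ℝ)..(2/t), F t r) ≤ ∫ r in (1:ℝ)..(2/t), 1/r := by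
        apply intervalIntegral.integral_mono_on h12t (hFint t 1 (2/t)) hi1'
        rintro s ⟨hs1, hs2⟩
        have hs0 : (0:ℝ) < s := lt_of_lt_of_le one_pos hs1
        have hst : s * t ≤ 2 := (le_div_iff₀ ht0).mp hs2
        have hbase0 : 0 ≤ 1 - t ^ 2 * s ^ 2 / 4 := by
          nlinarith [mul_nonneg (sub_nonneg.2 hst) (mul_nonneg hs0.le ht0.le)]
        have hB1 : (1 - t ^ 2 * s ^ 2 / 4) ^ q ≤ 1 :=
          Real.rpow_le_one hbase0 (by nlinarith [mul_nonneg (sq_nonneg t) (sq_nonneg s)]) hq0.le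
        have hA0' : 0 ≤ s ^ (d:ℕ) / (1 + s ^ 2) ^ p := by positivity
        calc F t s ≤ (s ^ (d:ℕ) / (1 + s ^ 2) ^ p) * 1 := mul_le_mul_of_nonneg_left hB1 hA0'
          _ = s ^ (d:ℕ) / (1 + s ^ 2) ^ p := mul_one _
          _ ≤ 1/s := hAub s hs1
      rw [integral_one_div h0uIcc2, div_one] at h1
      exact h1
    have hlog2 : Real.log (2/t) = Real.log 2 + Real.log (1/t) := by
      rw [Real.log_div (by norm_num) ht0.ne', Real.log_div one_ne_zero ht0.ne', Real.log_one]
      ring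
    linarith [hsplit2, hb1, hb2, hlog2.le, hlog2.ge]
  -- conclusion via liminf comparison
  set L := nhdsWithin (0:ℝ) (Set.Ioi 0) with hL
  haveI hNB : L.NeBot := by rw [hL]; infer_instance
  set C : ℝ := p / 2 + (d:ℝ) / 8 with hC
  have hlog : Tendsto (fun t : ℝ => Real.log (1/t)) L atTop := by
    have h1 : Tendsto (fun t : ℝ => -Real.log t) L atTop :=
      tendsto_neg_atBot_atTop.comp Real.tendsto_log_nhdsGT_zero
    refine h1.congr fun t => ?_
    rw [one_div, Real.log_inv]
  have hphi : Tendsto (fun t : ℝ => 1 - C / Real.log (1/t)) L (nhds 1) := by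
    have h0 : Tendsto (fun t : ℝ => C / Real.log (1/t)) L (nhds 0) :=
      tendsto_const_nhds.div_atTop hlog
    simpa using (tendsto_const_nhds (x := (1:ℝ))).sub h0
  have hev : ∀ᶠ t in L, 1 - C / Real.log (1/t) ≤ N₂ t / Real.log (1/t) := by
    filter_upwards [Ioo_mem_nhdsGT_of_mem (Set.left_mem_Ico.2 one_pos)] with t ht
    have hl : 0 < Real.log (1/t) := Real.log_pos (by rw [lt_div_iff₀ ht.1]; linarith [ht.2])
    have h1 := hmain t ht
    calc 1 - C / Real.log (1/t) = (Real.log (1/t) - C) / Real.log (1/t) := by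
          rw [sub_div, div_self hl.ne']
      _ ≤ N₂ t / Real.log (1/t) := by gcongr
  have hcob : IsCoboundedUnder (· ≥ ·) L (fun t => N₂ t / Real.log (1/t)) := by
    apply isCoboundedUnder_ge_of_eventually_le L (x := 2 + Real.log 2)
    have hexp1 : Real.exp (-1) < 1 := by
      rw [Real.exp_lt_one_iff]; norm_num
    filter_upwards [Ioo_mem_nhdsGT_of_mem
      (Set.left_mem_Ico.2 (Real.exp_pos (-1)))] with t ht
    have hte : t < 1 := lt_trans ht.2 hexp1
    have hl1 : 1 ≤ Real.log (1/t) := by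
      rw [one_div, Real.log_inv]
      have := (Real.log_le_iff_le_exp ht.1).mpr ht.2.le
      linarith
    have hl0 : 0 < Real.log (1/t) := lt_of_lt_of_le one_pos hl1
    have h1 := hub' t ⟨ht.1, hte⟩
    rw [div_le_iff₀ hl0]
    have hlog2 : 0 ≤ Real.log 2 := Real.log_nonneg one_le_two
    nlinarith [mul_nonneg (sub_nonneg.2 hl1) (by positivity : (0:ℝ) ≤ 1 + Real.log 2)]
  calc (1:ℝ) = liminf (fun t : ℝ => 1 - C / Real.log (1/t)) L := hphi.liminf_eq.symm
    _ ≤ liminf (fun t => N₂ t / Real.log (1/t)) L :=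
      liminf_le_liminf hev hphi.isBoundedUnder_ge hcob
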